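/- Let (X_i, Y_i)_{i=1}^N be i.i.d. ∼ p(x,y), let s be bounded measurable, and let the empirical conditional uniformity be L̂ = log( (1/N²) Σ_{i,j} ((‖w_σ‖_∞ − w_σ(Y_i, Y_j))/(‖w_σ‖_∞ − Ẑ_σ(Y_i))) e^{s(X_i, X_j)} ), with Ẑ_σ(Y_i) = (1/N) Σ_j w_σ(Y_i, Y_j). If w_σ is bounded, continuous, and sup_y Z_σ(y) < ‖w_σ‖_∞, then L̂ converges almost surely as N → ∞ to log E_{(x,x^-)∼p_neg}[e^{s(x,x^-)}]. -/

import Mathlib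

open MeasureTheory ProbabilityTheory Filter Function Topology

section helpers

variable {α : Type*} [MeasurableSpace α]

lemma integrable_of_abs_le (P : Measure α) [IsFiniteMeasure P] {f : α → ℝ}
    (hf : AEStronglyMeasurable f P) (C : ℝ) (h : ∀ a, |f a| ≤ C) : Integrable f P :=
  Integrable.mono' (integrable_const C) hf (ae_of_all _ fun a => by
    simpa [Real.norm_eq_abs] using h a)

lemma abs_integral_le' (P : Measure α) [IsProbabilityMeasure P] {f : α → ℝ}
    (hf : AEStronglyMeasurable f P) {c : ℝ} (h : ∀ a, |f a| ≤ c) : |∫ a, f a ∂P| ≤ c := by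
  calc |∫ a, f a ∂P| ≤ ∫ a, |f a| ∂P := by
        simpa [Real.norm_eq_abs] using norm_integral_le_integral_norm f (μ := P)
    _ ≤ ∫ _a, c ∂P := integral_mono (integrable_of_abs_le P hf c h).abs
        (integrable_const c) (fun a => h a)
    _ = c := by simp

lemma tendsto_zero_of_abs_le' {f g : ℕ → ℝ} (h : ∀ n, |f n| ≤ g n)
    (hg : Tendsto g atTop (𝓝 0)) : Tendsto f atTop (𝓝 0) := by
  have hneg : Tendsto (fun n => -g n) atTop (𝓝 0) := by simpa using hg.neg
  exact tendsto_of_tendsto_of_tendsto_of_le_of_le hneg hg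
    (fun n => (abs_le.mp (h n)).1.trans' (by simp)) (fun n => (abs_le.mp (h n)).2)

end helpers

section vstat

variable {Ω E : Type*} [MeasurableSpace Ω] [MeasurableSpace E]

/-- a.s. convergence to zero from a summable second-moment bound. -/
lemma tendsto_zero_of_integral_sq (μ : Measure Ω) [IsProbabilityMeasure μ]
    (D : ℕ → Ω → ℝ) (hmeas : ∀ N, Measurable (D N))
    (c : ℝ) (hint : ∀ N, Integrable (fun ω => (D N ω)^2) μ)
    (hbd : ∀ N, ∫ ω, (D N ω)^2 ∂μ ≤ c / (N:ℝ)^2) :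
    ∀ᵐ ω ∂μ, Tendsto (fun N => D N ω) atTop (𝓝 0) := by
  have hc : 0 ≤ c := by
    have h1 := hbd 1
    have h2 : (0:ℝ) ≤ ∫ ω, (D 1 ω)^2 ∂μ := integral_nonneg fun ω => sq_nonneg _
    simpa using h2.trans h1
  have hsum : Summable (fun N : ℕ => c / (N:ℝ)^2) := by
    have h : Summable (fun N : ℕ => 1 / (N:ℝ)^2) :=
      Real.summable_one_div_nat_pow.mpr (by norm_num)
    have := h.mul_left c
    simpa [div_eq_mul_inv, mul_comm, mul_left_comm] using this
  have key : ∫⁻ ω, ∑' N, ENNReal.ofReal ((D N ω)^2) ∂μ ≠ ⊤ := by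
    rw [lintegral_tsum (fun N => (((hmeas N).pow_const 2).ennreal_ofReal).aemeasurable)]
    have hle : ∀ N, ∫⁻ ω, ENNReal.ofReal ((D N ω)^2) ∂μ ≤ ENNReal.ofReal (c / (N:ℝ)^2) := by
      intro N
      rw [← ofReal_integral_eq_lintegral_ofReal (hint N) (ae_of_all _ fun ω => sq_nonneg _)]
      exact ENNReal.ofReal_le_ofReal (hbd N)
    refine ne_top_of_le_ne_top ?_ (ENNReal.tsum_le_tsum hle)
    rw [← ENNReal.ofReal_tsum_of_nonneg (fun N => div_nonneg hc (sq_nonneg _)) hsum]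
    exact ENNReal.ofReal_ne_top
  have hmeas' : Measurable (fun ω => ∑' N, ENNReal.ofReal ((D N ω)^2)) :=
    Measurable.ennreal_tsum fun N => ((hmeas N).pow_const 2).ennreal_ofReal
  filter_upwards [ae_lt_top hmeas' key] with ω hω
  have h0 : Tendsto (fun N => ENNReal.ofReal ((D N ω)^2)) atTop (𝓝 0) :=
    ENNReal.tendsto_atTop_zero_of_tsum_ne_top hω.ne
  have h1 : Tendsto (fun N => (D N ω)^2) atTop (𝓝 0) := by
    have h2 := (ENNReal.tendsto_toReal (by simp : (0:ENNReal) ≠ ⊤)).comp h0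
    simpa [Function.comp_def, ENNReal.toReal_ofReal (sq_nonneg _)] using h2
  have h2 : Tendsto (fun N => |D N ω|) atTop (𝓝 0) := by
    have h3 := (Real.continuous_sqrt.tendsto 0).comp h1
    simpa [Function.comp_def, Real.sqrt_sq_eq_abs] using h3
  exact tendsto_zero_of_abs_le' (fun n => le_rfl) h2

/-- SLLN for V-statistics of order two with bounded measurable kernel. -/
theorem vstat_slln (μ : Measure Ω) [IsProbabilityMeasure μ] (V : ℕ → Ω → E)
    (hVm : ∀ i, Measurable (V i))
    (hVi : iIndepFun V μ)
    (hVid : ∀ i, IdentDistrib (V i) (V 0) μ μ)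
    (g : E → E → ℝ) (hg : Measurable (Function.uncurry g))
    (C : ℝ) (hgC : ∀ a b, |g a b| ≤ C) :
    ∀ᵐ ω ∂μ, Tendsto (fun N : ℕ =>
        (1 / (N:ℝ)^2) * ∑ i ∈ Finset.range N, ∑ j ∈ Finset.range N, g (V i ω) (V j ω))
      atTop (𝓝 (∫ p, g p.1 p.2 ∂((μ.map (V 0)).prod (μ.map (V 0))))) := by
  classical
  set ν := μ.map (V 0) with hν
  haveI : IsProbabilityMeasure ν := Measure.isProbabilityMeasure_map (hVm 0).aemeasurable
  have hmapi : ∀ i, μ.map (V i) = ν := fun i => (hVid i).map_eq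
  have hmap2 : ∀ i j, i ≠ j → μ.map (fun ω => (V i ω, V j ω)) = ν.prod ν := by
    intro i j hij
    have h := hVi.indepFun hij
    rw [indepFun_iff_map_prod_eq_prod_map_map (hVm i).aemeasurable (hVm j).aemeasurable] at h
    rw [h, hmapi, hmapi]
  have hmap3 : ∀ i j k, i ≠ j → i ≠ k → j ≠ k →
      μ.map (fun ω => (V i ω, (V j ω, V k ω))) = ν.prod (ν.prod ν) := by
    intro i j k hij hik hjk
    have h := (hVi.indepFun_prodMk hVm j k i hij.symm hik.symm).symm
    rw [indepFun_iff_map_prod_eq_prod_map_map (hVm i).aemeasurable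
      ((hVm j).prodMk (hVm k)).aemeasurable] at h
    rw [h, hmapi, hmap2 j k hjk]
  have hmap4 : ∀ i j k l, i ≠ j → k ≠ l → i ≠ k → i ≠ l → j ≠ k → j ≠ l →
      μ.map (fun ω => ((V i ω, V j ω), (V k ω, V l ω))) = (ν.prod ν).prod (ν.prod ν) := by
    intro i j k l hij hkl hik hil hjk hjl
    have h := hVi.indepFun_prodMk_prodMk hVm i j k l hik hil hjk hjl
    rw [indepFun_iff_map_prod_eq_prod_map_map ((hVm i).prodMk (hVm j)).aemeasurable
      ((hVm k).prodMk (hVm l)).aemeasurable] at h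
    rw [h, hmap2 i j hij, hmap2 k l hkl]
  -- transfer of integrals
  have hI3 : ∀ (i j k : ℕ), i ≠ j → i ≠ k → j ≠ k → ∀ (φ : E → E → E → ℝ),
      Measurable (fun p : E × E × E => φ p.1 p.2.1 p.2.2) → ∀ (c : ℝ), (∀ a b d, |φ a b d| ≤ c) →
      ∫ ω, φ (V i ω) (V j ω) (V k ω) ∂μ = ∫ a, ∫ b, ∫ d, φ a b d ∂ν ∂ν ∂ν := by
    intro i j k hij hik hjk φ hφ c hφb
    have h1 : ∫ ω, φ (V i ω) (V j ω) (V k ω) ∂μ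
        = ∫ p : E × E × E, φ p.1 p.2.1 p.2.2 ∂(ν.prod (ν.prod ν)) := by
      rw [← hmap3 i j k hij hik hjk]
      exact (integral_map ((hVm i).prodMk ((hVm j).prodMk (hVm k))).aemeasurable
        hφ.aestronglyMeasurable).symm
    rw [h1, integral_prod _ (integrable_of_abs_le _ hφ.aestronglyMeasurable c
      (fun p => hφb _ _ _))]
    refine integral_congr_ae (ae_of_all _ fun a => ?_)
    exact integral_prod _ (integrable_of_abs_le _
      (hφ.comp measurable_prodMk_left).aestronglyMeasurable c (fun p => hφb _ _ _))
  -- nonnegativity of C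
  have hΩ : Nonempty Ω := by
    by_contra h
    rw [not_nonempty_iff] at h
    have h1 : μ Set.univ = 1 := measure_univ
    rw [Set.univ_eq_empty_iff.mpr h] at h1
    simp at h1
  obtain ⟨ω0⟩ := hΩ
  have hC0 : 0 ≤ C := le_trans (abs_nonneg _) (hgC (V 0 ω0) (V 0 ω0))
  -- the Hoeffding decomposition
  set θ := ∫ p : E × E, g p.1 p.2 ∂(ν.prod ν) with hθ
  have hgsm : StronglyMeasurable (Function.uncurry g) := hg.stronglyMeasurable
  have hgint : Integrable (fun p : E × E => g p.1 p.2) (ν.prod ν) :=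
    integrable_of_abs_le _ hg.aestronglyMeasurable C (fun p => hgC _ _)
  have hθabs : |θ| ≤ C := abs_integral_le' _ hg.aestronglyMeasurable (fun p => hgC _ _)
  set g1 : E → ℝ := fun a => (∫ b, g a b ∂ν) - θ with hg1
  set g2 : E → ℝ := fun b => (∫ a, g a b ∂ν) - θ with hg2
  set r : E → E → ℝ := fun a b => g a b - g1 a - g2 b - θ with hr
  have hg1m : Measurable g1 := (hgsm.integral_prod_right.measurable).sub measurable_const
  have hg2m : Measurable g2 := (hgsm.integral_prod_left.measurable).sub measurable_const
  have hrm : Measurable (Function.uncurry r) := by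
    have : Function.uncurry r = fun p : E × E =>
        Function.uncurry g p - g1 p.1 - g2 p.2 - θ := rfl
    rw [this]
    exact ((hg.sub (hg1m.comp measurable_fst)).sub (hg2m.comp measurable_snd)).sub
      measurable_const
  have hgamb : ∀ a, Measurable (fun b => g a b) := fun a => hg.comp measurable_prodMk_left
  have hgbma : ∀ b, Measurable (fun a => g a b) := fun b =>
    hg.comp (measurable_id.prodMk measurable_const)
  have hg1b : ∀ a, |g1 a| ≤ 2 * C := by
    intro a
    have h1 : |∫ b, g a b ∂ν| ≤ C :=
      abs_integral_le' _ (hgamb a).aestronglyMeasurable (fun b => hgC _ _)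
    calc |g1 a| ≤ |∫ b, g a b ∂ν| + |θ| := abs_sub _ _
      _ ≤ 2 * C := by linarith
  have hg2b : ∀ b, |g2 b| ≤ 2 * C := by
    intro b
    have h1 : |∫ a, g a b ∂ν| ≤ C :=
      abs_integral_le' _ (hgbma b).aestronglyMeasurable (fun a => hgC _ _)
    calc |g2 b| ≤ |∫ a, g a b ∂ν| + |θ| := abs_sub _ _
      _ ≤ 2 * C := by linarith
  have hrb : ∀ a b, |r a b| ≤ 6 * C := by
    intro a b
    have h1 := abs_le.mp (hgC a b)
    have h2 := abs_le.mp (hg1b a)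
    have h3 := abs_le.mp (hg2b b)
    have h4 := abs_le.mp hθabs
    rw [hr]
    exact abs_le.mpr ⟨by dsimp only; linarith, by dsimp only; linarith⟩
  -- Fubini facts
  have hθiter : θ = ∫ a, ∫ b, g a b ∂ν ∂ν := integral_prod _ hgint
  have hθswap : ∫ b, ∫ a, g a b ∂ν ∂ν = θ := by
    rw [hθiter]
    exact (integral_integral_swap (f := g) (by exact hgint)).symm
  have hintg1 : Integrable g1 ν := integrable_of_abs_le _ hg1m.aestronglyMeasurable _ hg1b
  have hintg2 : Integrable g2 ν := integrable_of_abs_le _ hg2m.aestronglyMeasurable _ hg2b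
  have hg1_zero : ∫ a, g1 a ∂ν = 0 := by
    rw [hg1]
    rw [integral_sub (by
      exact integrable_of_abs_le _ hgsm.integral_prod_right.aestronglyMeasurable C
        (fun a => abs_integral_le' _ (hgamb a).aestronglyMeasurable (fun b => hgC _ _)))
      (integrable_const θ)]
    rw [integral_const, probReal_univ]
    simp [← hθiter]
  have hg2_zero : ∫ b, g2 b ∂ν = 0 := by
    rw [hg2]
    rw [integral_sub (by
      exact integrable_of_abs_le _ hgsm.integral_prod_left.aestronglyMeasurable C
        (fun b => abs_integral_le' _ (hgbma b).aestronglyMeasurable (fun a => hgC _ _)))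
      (integrable_const θ)]
    rw [integral_const, probReal_univ]
    simp [hθswap]
  have hr_deg1 : ∀ a, ∫ b, r a b ∂ν = 0 := by
    intro a
    have h1 : (fun b => r a b) = fun b => (g a b - g1 a) - (g2 b + θ) := by
      funext b; rw [hr]; ring
    have hA : Integrable (fun b => g a b - g1 a) ν := by
      exact (integrable_of_abs_le _ (hgamb a).aestronglyMeasurable C
        (fun b => hgC _ _)).sub (integrable_const _)
    have hB : Integrable (fun b => g2 b + θ) ν := by
      exact hintg2.add (integrable_const _)
    have hA' : Integrable (fun b => g a b) ν :=
      integrable_of_abs_le _ (hgamb a).aestronglyMeasurable C (fun b => hgC _ _)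
    rw [h1, integral_sub hA hB, integral_sub hA' (integrable_const _),
      integral_add hintg2 (integrable_const _), hg2_zero]
    simp [hg1]
  have hr_deg2 : ∀ b, ∫ a, r a b ∂ν = 0 := by
    intro b
    have h1 : (fun a => r a b) = fun a => (g a b - g2 b) - (g1 a + θ) := by
      funext a; rw [hr]; ring
    have hA : Integrable (fun a => g a b - g2 b) ν := by
      exact (integrable_of_abs_le _ (hgbma b).aestronglyMeasurable C
        (fun a => hgC _ _)).sub (integrable_const _)
    have hB : Integrable (fun a => g1 a + θ) ν := by
      exact hintg1.add (integrable_const _)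
    have hA' : Integrable (fun a => g a b) ν :=
      integrable_of_abs_le _ (hgbma b).aestronglyMeasurable C (fun a => hgC _ _)
    rw [h1, integral_sub hA hB, integral_sub hA' (integrable_const _),
      integral_add hintg1 (integrable_const _), hg1_zero]
    simp [hg2]
  have hrint : Integrable (fun p : E × E => r p.1 p.2) (ν.prod ν) :=
    integrable_of_abs_le _ hrm.aestronglyMeasurable _ (fun p => hrb _ _)
  have hr_tot : ∫ p : E × E, r p.1 p.2 ∂(ν.prod ν) = 0 := by
    rw [integral_prod _ hrint]
    simp [hr_deg1]
  have hC6 : (0:ℝ) ≤ 6 * C := by linarith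
  have hrrb : ∀ a b a' b', |r a b * r a' b'| ≤ 6 * C * (6 * C) := by
    intro a b a' b'
    rw [abs_mul]
    exact mul_le_mul (hrb _ _) (hrb _ _) (abs_nonneg _) hC6
  have hm1 : Measurable (fun p : E × E × E => r p.1 p.2.1 * r p.1 p.2.2) :=
    Measurable.mul
      (hrm.comp (measurable_fst.prodMk (measurable_fst.comp measurable_snd)))
      (hrm.comp (measurable_fst.prodMk (measurable_snd.comp measurable_snd)))
  have hm2 : Measurable (fun p : E × E × E => r p.1 p.2.1 * r p.2.2 p.1) :=
    Measurable.mul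
      (hrm.comp (measurable_fst.prodMk (measurable_fst.comp measurable_snd)))
      (hrm.comp ((measurable_snd.comp measurable_snd).prodMk measurable_fst))
  have hm3 : Measurable (fun p : E × E × E => r p.2.1 p.1 * r p.1 p.2.2) :=
    Measurable.mul
      (hrm.comp ((measurable_fst.comp measurable_snd).prodMk measurable_fst))
      (hrm.comp (measurable_fst.prodMk (measurable_snd.comp measurable_snd)))
  have hm4 : Measurable (fun p : E × E × E => r p.2.1 p.1 * r p.2.2 p.1) :=
    Measurable.mul
      (hrm.comp ((measurable_fst.comp measurable_snd).prodMk measurable_fst))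
      (hrm.comp ((measurable_snd.comp measurable_snd).prodMk measurable_fst))
  have hzero : ∀ i j k l : ℕ, i ≠ j → k ≠ l → (k, l) ≠ (i, j) → (k, l) ≠ (j, i) →
      ∫ ω, r (V i ω) (V j ω) * r (V k ω) (V l ω) ∂μ = 0 := by
    intro i j k l hij hkl hne1 hne2
    by_cases hik : i = k
    · subst hik
      have hil : i ≠ l := hkl
      have hjl : j ≠ l := fun h => hne1 (by rw [h])
      have h := hI3 i j l hij hil hjl (fun a b d => r a b * r a d) hm1
        (6 * C * (6 * C)) (fun a b d => hrrb _ _ _ _)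
      beta_reduce at h
      rw [h]
      have hinner : ∀ a b : E, ∫ d, r a b * r a d ∂ν = 0 := by
        intro a b
        rw [integral_const_mul, hr_deg1 a, mul_zero]
      simp [hinner]
    · by_cases hil : i = l
      · subst hil
        have hkj : k ≠ j := fun h => hne2 (by rw [h])
        have h := hI3 i j k hij (fun h => hik h) (fun h => hkj h.symm)
          (fun a b d => r a b * r d a) hm2
          (6 * C * (6 * C)) (fun a b d => hrrb _ _ _ _)
        beta_reduce at h
        rw [h]
        have hinner : ∀ a b : E, ∫ d, r a b * r d a ∂ν = 0 := by
          intro a b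
          rw [integral_const_mul, hr_deg2 a, mul_zero]
        simp [hinner]
      · by_cases hjk : j = k
        · subst hjk
          have hli : l ≠ i := fun h => hne2 (by rw [h])
          have h := hI3 j i l (fun h => hij h.symm) hkl (fun h => hli h.symm)
            (fun b a d => r a b * r b d) hm3
            (6 * C * (6 * C)) (fun b a d => hrrb _ _ _ _)
          beta_reduce at h
          rw [h]
          have hinner : ∀ b a : E, ∫ d, r a b * r b d ∂ν = 0 := by
            intro b a
            rw [integral_const_mul, hr_deg1 b, mul_zero]
          simp [hinner]
        · by_cases hjl : j = l
          · subst hjl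
            have hkj : k ≠ j := hkl
            have h := hI3 j i k (fun h => hij h.symm) (fun h => hkj h.symm) hik
              (fun b a d => r a b * r d b) hm4
              (6 * C * (6 * C)) (fun b a d => hrrb _ _ _ _)
            beta_reduce at h
            rw [h]
            have hinner : ∀ b a : E, ∫ d, r a b * r d b ∂ν = 0 := by
              intro b a
              rw [integral_const_mul, hr_deg2 b, mul_zero]
            simp [hinner]
          · -- all four indices distinct
            have hmap := hmap4 i j k l hij hkl hik hil hjk hjl
            have hmeas4 : Measurable (fun p : (E × E) × (E × E) =>
                r p.1.1 p.1.2 * r p.2.1 p.2.2) :=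
              Measurable.mul
                (hrm.comp ((measurable_fst.comp measurable_fst).prodMk
                  (measurable_snd.comp measurable_fst)))
                (hrm.comp ((measurable_fst.comp measurable_snd).prodMk
                  (measurable_snd.comp measurable_snd)))
            have h1 : ∫ ω, r (V i ω) (V j ω) * r (V k ω) (V l ω) ∂μ
                = ∫ p : (E × E) × (E × E), r p.1.1 p.1.2 * r p.2.1 p.2.2
                  ∂((ν.prod ν).prod (ν.prod ν)) := by
              rw [← hmap]
              exact (integral_map
                (((hVm i).prodMk (hVm j)).prodMk ((hVm k).prodMk (hVm l))).aemeasurable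
                hmeas4.aestronglyMeasurable).symm
            have h2 := integral_prod_mul (μ := ν.prod ν) (ν := ν.prod ν)
              (f := fun p : E × E => r p.1 p.2) (g := fun p : E × E => r p.1 p.2)
            beta_reduce at h2
            rw [h1, h2, hr_tot, mul_zero]
  -- the centered off-diagonal V-statistic and its second moment
  set K : ℝ := 6 * C * (6 * C) with hK
  have hK0 : 0 ≤ K := mul_nonneg hC6 hC6
  set S : ℕ → Ω → ℝ := fun N ω => ∑ p ∈ (Finset.range N).offDiag, r (V p.1 ω) (V p.2 ω)
    with hS
  have hrmeasij : ∀ i j : ℕ, Measurable (fun ω => r (V i ω) (V j ω)) := fun i j =>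
    hrm.comp ((hVm i).prodMk (hVm j))
  have hSmeas : ∀ N, Measurable (S N) := fun N =>
    Finset.measurable_sum _ (fun p _ => hrmeasij p.1 p.2)
  have hprodint : ∀ i j k l : ℕ,
      Integrable (fun ω => r (V i ω) (V j ω) * r (V k ω) (V l ω)) μ :=
    fun i j k l => integrable_of_abs_le _
      ((hrmeasij i j).mul (hrmeasij k l)).aestronglyMeasurable _ (fun ω => hrrb _ _ _ _)
  have hprodbd : ∀ i j k l : ℕ,
      ∫ ω, r (V i ω) (V j ω) * r (V k ω) (V l ω) ∂μ ≤ K := fun i j k l =>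
    le_trans (le_abs_self _) (abs_integral_le' μ
      ((hrmeasij i j).mul (hrmeasij k l)).aestronglyMeasurable (fun ω => hrrb _ _ _ _))
  have hS2 : ∀ N : ℕ, ∫ ω, (S N ω)^2 ∂μ ≤ (N:ℝ)^2 * (2 * K) := by
    intro N
    have hexpand : ∀ ω : Ω, (S N ω)^2 = ∑ p ∈ (Finset.range N).offDiag,
        ∑ q ∈ (Finset.range N).offDiag,
          r (V p.1 ω) (V p.2 ω) * r (V q.1 ω) (V q.2 ω) := by
      intro ω
      rw [hS]
      beta_reduce
      rw [sq, Finset.sum_mul_sum]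
    calc ∫ ω, (S N ω)^2 ∂μ
        = ∑ p ∈ (Finset.range N).offDiag, ∑ q ∈ (Finset.range N).offDiag,
            ∫ ω, r (V p.1 ω) (V p.2 ω) * r (V q.1 ω) (V q.2 ω) ∂μ := by
          rw [integral_congr_ae (ae_of_all _ hexpand),
            integral_finset_sum _ (fun p _ =>
              integrable_finset_sum _ (fun q _ => hprodint _ _ _ _))]
          exact Finset.sum_congr rfl fun p _ =>
            integral_finset_sum _ (fun q _ => hprodint _ _ _ _)
      _ ≤ ∑ _p ∈ (Finset.range N).offDiag, (2 * K) := by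
          apply Finset.sum_le_sum
          intro p hp
          obtain ⟨hp1, hp2, hpne⟩ := Finset.mem_offDiag.mp hp
          have hterm : ∀ q ∈ (Finset.range N).offDiag,
              ∫ ω, r (V p.1 ω) (V p.2 ω) * r (V q.1 ω) (V q.2 ω) ∂μ ≤
                ((if q = p then K else 0) + (if q = (p.2, p.1) then K else 0)) := by
            intro q hq
            obtain ⟨hq1, hq2, hqne⟩ := Finset.mem_offDiag.mp hq
            by_cases h1 : q = p
            · have h2 : q ≠ (p.2, p.1) := by
                rw [h1]
                intro hcon
                exact hpne (congrArg Prod.fst hcon)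
              rw [if_pos h1, if_neg h2, add_zero]
              exact hprodbd _ _ _ _
            · by_cases h2 : q = (p.2, p.1)
              · rw [if_neg h1, if_pos h2, zero_add]
                exact hprodbd _ _ _ _
              · rw [if_neg h1, if_neg h2, add_zero]
                rw [hzero p.1 p.2 q.1 q.2 hpne hqne h1 h2]
          calc ∑ q ∈ (Finset.range N).offDiag,
                ∫ ω, r (V p.1 ω) (V p.2 ω) * r (V q.1 ω) (V q.2 ω) ∂μ
              ≤ ∑ q ∈ (Finset.range N).offDiag,
                ((if q = p then K else 0) + (if q = (p.2, p.1) then K else 0)) :=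
                Finset.sum_le_sum hterm
            _ = (∑ q ∈ (Finset.range N).offDiag, (if q = p then K else 0))
                + ∑ q ∈ (Finset.range N).offDiag, (if q = (p.2, p.1) then K else 0) :=
                Finset.sum_add_distrib
            _ ≤ K + K := by
                have e1 : (∑ q ∈ (Finset.range N).offDiag, (if q = p then K else 0))
                    = if p ∈ (Finset.range N).offDiag then K else 0 :=
                  Finset.sum_ite_eq' _ _ _
                have e2 : (∑ q ∈ (Finset.range N).offDiag,
                    (if q = (p.2, p.1) then K else 0))
                    = if (p.2, p.1) ∈ (Finset.range N).offDiag then K else 0 :=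
                  Finset.sum_ite_eq' _ _ _
                rw [e1, e2]
                gcongr <;> split <;> simp [hK0]
            _ = 2 * K := by ring
      _ ≤ (N:ℝ)^2 * (2 * K) := by
          rw [Finset.sum_const, nsmul_eq_mul]
          have hcard : (((Finset.range N).offDiag.card : ℕ) : ℝ) ≤ (N:ℝ)^2 := by
            have h1 : ((Finset.range N).offDiag.card : ℕ) ≤ N * N := by
              rw [Finset.offDiag_card, Finset.card_range]
              exact Nat.sub_le _ _
            calc (((Finset.range N).offDiag.card : ℕ) : ℝ) ≤ ((N * N : ℕ) : ℝ) := by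
                  exact_mod_cast h1
              _ = (N:ℝ)^2 := by push_cast; ring
          exact mul_le_mul_of_nonneg_right hcard (by linarith)
  -- a.s. convergence of the degenerate part
  have hDtend : ∀ᵐ ω ∂μ, Tendsto (fun N : ℕ => (1/(N:ℝ)^2) * S N ω) atTop (𝓝 0) := by
    apply tendsto_zero_of_integral_sq μ (fun (N : ℕ) ω => (1/(N:ℝ)^2) * S N ω)
      (fun N => (measurable_const.mul (hSmeas N))) (2 * K)
    · intro N
      have hSb : ∀ ω, |S N ω| ≤ (((Finset.range N).offDiag.card : ℕ) : ℝ) * (6 * C) := by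
        intro ω
        rw [hS]
        beta_reduce
        calc |∑ p ∈ (Finset.range N).offDiag, r (V p.1 ω) (V p.2 ω)|
            ≤ ∑ p ∈ (Finset.range N).offDiag, |r (V p.1 ω) (V p.2 ω)| :=
              Finset.abs_sum_le_sum_abs _ _
          _ ≤ ∑ _p ∈ (Finset.range N).offDiag, (6 * C) :=
              Finset.sum_le_sum (fun p _ => hrb _ _)
          _ = _ := by rw [Finset.sum_const, nsmul_eq_mul]
      refine integrable_of_abs_le _ ?_
        (((1/(N:ℝ)^2) * ((((Finset.range N).offDiag.card : ℕ) : ℝ) * (6 * C)))^2) ?_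
      · exact ((measurable_const.mul (hSmeas N)).pow_const 2).aestronglyMeasurable
      · intro ω
        rw [abs_of_nonneg (sq_nonneg _), sq_abs ((1/(N:ℝ)^2) * S N ω) |>.symm]
        apply pow_le_pow_left₀ (abs_nonneg _)
        rw [abs_mul, abs_of_nonneg (by positivity : (0:ℝ) ≤ 1/(N:ℝ)^2)]
        exact mul_le_mul_of_nonneg_left (hSb ω) (by positivity)
    · intro N
      have h1 : ∀ ω, ((1/(N:ℝ)^2) * S N ω)^2 = ((1/(N:ℝ)^2))^2 * (S N ω)^2 := by
        intro ω; ring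
      rw [integral_congr_ae (ae_of_all _ h1), integral_const_mul]
      rcases Nat.eq_zero_or_pos N with h | h
      · simp [h]
      · have hN : ((N:ℝ)) ≠ 0 := Nat.cast_ne_zero.mpr (by omega)
        have h2 : ((1/(N:ℝ)^2))^2 * ((N:ℝ)^2 * (2*K)) = 2 * K / (N:ℝ)^2 := by
          field_simp
        calc ((1/(N:ℝ)^2))^2 * ∫ ω, (S N ω)^2 ∂μ
            ≤ ((1/(N:ℝ)^2))^2 * ((N:ℝ)^2 * (2*K)) :=
              mul_le_mul_of_nonneg_left (hS2 N) (by positivity)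
          _ = 2 * K / (N:ℝ)^2 := h2
  -- strong laws for the linear parts
  have hSLLN1 : ∀ᵐ ω ∂μ, Tendsto (fun N : ℕ => (∑ i ∈ Finset.range N, g1 (V i ω)) / N)
      atTop (𝓝 0) := by
    have h := strong_law_ae_real (fun i ω => g1 (V i ω))
      (integrable_of_abs_le μ (hg1m.comp (hVm 0)).aestronglyMeasurable _ (fun ω => hg1b _))
      (fun i j hij => (hVi.indepFun hij).comp hg1m hg1m)
      (fun i => (hVid i).comp hg1m)
    have hE : ∫ ω, g1 (V 0 ω) ∂μ = 0 := by
      rw [← integral_map (hVm 0).aemeasurable hg1m.aestronglyMeasurable, ← hν, hg1_zero]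
    simpa [hE] using h
  have hSLLN2 : ∀ᵐ ω ∂μ, Tendsto (fun N : ℕ => (∑ j ∈ Finset.range N, g2 (V j ω)) / N)
      atTop (𝓝 0) := by
    have h := strong_law_ae_real (fun i ω => g2 (V i ω))
      (integrable_of_abs_le μ (hg2m.comp (hVm 0)).aestronglyMeasurable _ (fun ω => hg2b _))
      (fun i j hij => (hVi.indepFun hij).comp hg2m hg2m)
      (fun i => (hVid i).comp hg2m)
    have hE : ∫ ω, g2 (V 0 ω) ∂μ = 0 := by
      rw [← integral_map (hVm 0).aemeasurable hg2m.aestronglyMeasurable, ← hν, hg2_zero]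
    simpa [hE] using h
  -- assembly
  filter_upwards [hSLLN1, hSLLN2, hDtend] with ω h1 h2 h3
  have hdiag : Tendsto (fun N : ℕ => (1/(N:ℝ)^2) * ∑ i ∈ Finset.range N, r (V i ω) (V i ω))
      atTop (𝓝 0) := by
    apply tendsto_zero_of_abs_le' (g := fun N : ℕ => 6 * C / (N:ℝ))
    · intro N
      have habs : |∑ i ∈ Finset.range N, r (V i ω) (V i ω)| ≤ (N:ℝ) * (6 * C) := by
        calc |∑ i ∈ Finset.range N, r (V i ω) (V i ω)|
            ≤ ∑ i ∈ Finset.range N, |r (V i ω) (V i ω)| := Finset.abs_sum_le_sum_abs _ _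
          _ ≤ ∑ _i ∈ Finset.range N, (6 * C) := Finset.sum_le_sum (fun i _ => hrb _ _)
          _ = (N:ℝ) * (6 * C) := by rw [Finset.sum_const, Finset.card_range, nsmul_eq_mul]
      rcases Nat.eq_zero_or_pos N with h | h
      · simp [h]
      · have hN : (0:ℝ) < (N:ℝ) := by exact_mod_cast h
        rw [abs_mul, abs_of_nonneg (by positivity : (0:ℝ) ≤ 1/(N:ℝ)^2)]
        calc (1/(N:ℝ)^2) * |∑ i ∈ Finset.range N, r (V i ω) (V i ω)|
            ≤ (1/(N:ℝ)^2) * ((N:ℝ) * (6 * C)) :=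
              mul_le_mul_of_nonneg_left habs (by positivity)
          _ = 6 * C / (N:ℝ) := by field_simp
    · exact tendsto_const_div_atTop_nhds_zero_nat (6 * C)
  have hkey : ∀ N : ℕ, 1 ≤ N → (1/(N:ℝ)^2) * ∑ i ∈ Finset.range N,
      ∑ j ∈ Finset.range N, g (V i ω) (V j ω)
      = θ + (∑ i ∈ Finset.range N, g1 (V i ω)) / N
        + (∑ j ∈ Finset.range N, g2 (V j ω)) / N
        + (1/(N:ℝ)^2) * S N ω + (1/(N:ℝ)^2) * ∑ i ∈ Finset.range N, r (V i ω) (V i ω) := by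
    intro N hN
    have hNne : ((N:ℝ)) ≠ 0 := Nat.cast_ne_zero.mpr (by omega)
    have hgd : ∀ a b : E, g a b = θ + g1 a + g2 b + r a b := by
      intro a b; rw [hr]; ring
    have e1 : ∀ i : ℕ, ∑ j ∈ Finset.range N, g (V i ω) (V j ω)
        = (N:ℝ) * θ + (N:ℝ) * g1 (V i ω) + (∑ j ∈ Finset.range N, g2 (V j ω))
          + ∑ j ∈ Finset.range N, r (V i ω) (V j ω) := by
      intro i
      rw [Finset.sum_congr rfl (fun j _ => hgd (V i ω) (V j ω)), Finset.sum_add_distrib,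
        Finset.sum_add_distrib, Finset.sum_add_distrib, Finset.sum_const, Finset.sum_const,
        Finset.card_range, nsmul_eq_mul, nsmul_eq_mul]
    have hsum : ∑ i ∈ Finset.range N, ∑ j ∈ Finset.range N, g (V i ω) (V j ω)
        = (N:ℝ)^2 * θ + (N:ℝ) * (∑ i ∈ Finset.range N, g1 (V i ω))
          + (N:ℝ) * (∑ j ∈ Finset.range N, g2 (V j ω))
          + ∑ i ∈ Finset.range N, ∑ j ∈ Finset.range N, r (V i ω) (V j ω) := by
      rw [Finset.sum_congr rfl (fun i _ => e1 i), Finset.sum_add_distrib,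
        Finset.sum_add_distrib, Finset.sum_add_distrib, Finset.sum_const, Finset.sum_const,
        Finset.card_range, nsmul_eq_mul, nsmul_eq_mul, ← Finset.mul_sum]
      ring
    have hsplit : ∑ i ∈ Finset.range N, ∑ j ∈ Finset.range N, r (V i ω) (V j ω)
        = S N ω + ∑ i ∈ Finset.range N, r (V i ω) (V i ω) := by
      rw [← Finset.sum_product' (f := fun i j => r (V i ω) (V j ω)),
        ← Finset.diag_union_offDiag (Finset.range N),
        Finset.sum_union (Finset.disjoint_diag_offDiag _), Finset.sum_diag, hS]
      beta_reduce
      ring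
    rw [hsum, hsplit]
    field_simp
    ring
  have hfinal : Tendsto (fun N : ℕ =>
      θ + (∑ i ∈ Finset.range N, g1 (V i ω)) / N
        + (∑ j ∈ Finset.range N, g2 (V j ω)) / N
        + (1/(N:ℝ)^2) * S N ω + (1/(N:ℝ)^2) * ∑ i ∈ Finset.range N, r (V i ω) (V i ω))
      atTop (𝓝 (θ + 0 + 0 + 0 + 0)) :=
    (((tendsto_const_nhds.add h1).add h2).add h3).add hdiag
  have hzeros : θ + 0 + 0 + 0 + 0 = θ := by ring
  rw [hzeros] at hfinal
  refine Tendsto.congr' ?_ hfinal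
  filter_upwards [eventually_ge_atTop 1] with N hN using (hkey N hN).symm

end vstat

/-- almost-sure convergence of the empirical conditional uniformity estimator
to the population conditional uniformity loss (labels in a finite space). -/
theorem empirical_conditional_uniformity_tendsto
    {Ω X Y : Type*} [MeasurableSpace Ω] [MeasurableSpace X]
    [MeasurableSpace Y] [Fintype Y] [MeasurableSingletonClass Y]
    (μ : Measure Ω) [IsProbabilityMeasure μ]
    (V : ℕ → Ω → X × Y)                                -- (X_i, Y_i)
    (hV_meas : ∀ i, Measurable (V i))
    (hV_indep : iIndepFun V μ)
    (hV_ident : ∀ i, IdentDistrib (V i) (V 0) μ μ)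
    (s : X → X → ℝ)
    (hs_meas : Measurable (Function.uncurry s))
    (B : ℝ) (hs_bdd : ∀ x x', |s x x'| ≤ B)
    (w : Y → Y → ℝ)
    (hw_nonneg : ∀ y y', 0 ≤ w y y')
    (M : ℝ)                                            -- M = ‖w_σ‖_∞
    (hM : IsLUB (Set.range fun q : Y × Y => w q.1 q.2) M)
    (Z : Y → ℝ)
    (hZ : ∀ y, Z y = ∫ ω, w y (V 0 ω).2 ∂μ)           -- Z_σ(y) = E[w_σ(y, Y₁)]
    (hZ_lt : ∀ y, Z y < M)
    (ρ : Measure (X × Y)) (hρ : ρ = μ.map (V 0)) :     -- law of (X₁, Y₁)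
    ∀ᵐ ω ∂μ, Tendsto
      (fun N : ℕ =>
        Real.log ((1 / (N : ℝ) ^ 2) *
          ∑ i ∈ Finset.range N, ∑ j ∈ Finset.range N,
            ((M - w (V i ω).2 (V j ω).2) /
              (M - (1 / (N : ℝ)) * ∑ j' ∈ Finset.range N, w (V i ω).2 (V j' ω).2)) *
            Real.exp (s (V i ω).1 (V j ω).1)))
      atTop
      (nhds (Real.log (∫ q : (X × Y) × (X × Y),
        ((M - w q.1.2 q.2.2) / (M - Z q.1.2)) * Real.exp (s q.1.1 q.2.1)
        ∂(ρ.prod ρ)))) := by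
  classical
  subst hρ
  haveI : IsProbabilityMeasure (μ.map (V 0)) :=
    Measure.isProbabilityMeasure_map (hV_meas 0).aemeasurable
  have hΩ : Nonempty Ω := by
    by_contra h
    rw [not_nonempty_iff] at h
    have h1 : μ Set.univ = 1 := measure_univ
    rw [Set.univ_eq_empty_iff.mpr h] at h1
    simp at h1
  obtain ⟨ω0⟩ := hΩ
  have hYne : Nonempty Y := ⟨(V 0 ω0).2⟩
  have wM : ∀ y y', w y y' ≤ M := fun y y' => hM.1 ⟨(y, y'), rfl⟩
  have hM0 : (0:ℝ) ≤ M :=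
    le_trans (hw_nonneg (Classical.arbitrary Y) (Classical.arbitrary Y)) (wM _ _)
  have hB0 : (0:ℝ) ≤ B := le_trans (abs_nonneg _) (hs_bdd (V 0 ω0).1 (V 0 ω0).1)
  -- the per-label kernels
  set g : Y → (X × Y) → (X × Y) → ℝ :=
    fun y a b => if a.2 = y then (M - w y b.2) * Real.exp (s a.1 b.1) else 0 with hgdef
  have hg_meas : ∀ y, Measurable (Function.uncurry (g y)) := by
    intro y
    have hset : MeasurableSet {p : (X × Y) × (X × Y) | p.1.2 = y} :=
      measurable_fst.snd (measurableSet_singleton y)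
    exact Measurable.ite hset
      ((measurable_const.sub ((measurable_of_countable (w y)).comp
        measurable_snd.snd)).mul
        (Real.measurable_exp.comp (hs_meas.comp
          (measurable_fst.fst.prodMk measurable_snd.fst))))
      measurable_const
  have hg_bdd : ∀ y a b, |g y a b| ≤ M * Real.exp B := by
    intro y a b
    rw [hgdef]
    by_cases h : a.2 = y
    · simp only [h, if_true]
      rw [abs_of_nonneg (mul_nonneg (by linarith [wM y b.2]) (Real.exp_nonneg _))]
      apply mul_le_mul (by linarith [hw_nonneg y b.2]) (Real.exp_le_exp.mpr
        (le_trans (le_abs_self _) (hs_bdd _ _))) (Real.exp_nonneg _) hM0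
    · simp only [h, if_false, abs_zero]
      positivity
  -- V-statistic SLLN per label
  have hU : ∀ y : Y, ∀ᵐ ω ∂μ, Tendsto (fun N : ℕ =>
      (1 / (N:ℝ)^2) * ∑ i ∈ Finset.range N, ∑ j ∈ Finset.range N, g y (V i ω) (V j ω))
      atTop (𝓝 (∫ p, g y p.1 p.2 ∂((μ.map (V 0)).prod (μ.map (V 0))))) := by
    intro y
    exact vstat_slln μ V hV_meas hV_indep hV_ident (g y) (hg_meas y)
      (M * Real.exp B) (hg_bdd y)
  -- SLLN for the normalisation
  have hA : ∀ y : Y, ∀ᵐ ω ∂μ, Tendsto (fun N : ℕ =>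
      (∑ j' ∈ Finset.range N, w y (V j' ω).2) / N) atTop (𝓝 (Z y)) := by
    intro y
    have hwm : Measurable (fun p : X × Y => w y p.2) :=
      (measurable_of_countable (w y)).comp measurable_snd
    have h := strong_law_ae_real (fun j ω => w y (V j ω).2)
      (integrable_of_abs_le μ (hwm.comp (hV_meas 0)).aestronglyMeasurable M
        (fun ω => abs_le.mpr ⟨by linarith [hw_nonneg y (V 0 ω).2], wM _ _⟩))
      (fun i j hij => (hV_indep.indepFun hij).comp hwm hwm)
      (fun i => (hV_ident i).comp hwm)
    have hE : ∫ ω, w y (V 0 ω).2 ∂μ = Z y := (hZ y).symm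
    simpa [hE] using h
  -- basic positivity facts
  have hMZpos : ∀ y : Y, 0 < M - Z y := fun y => sub_pos.mpr (hZ_lt y)
  have hMZne : ∀ y : Y, M - Z y ≠ 0 := fun y => (hMZpos y).ne'
  set cinv := ∑ y : Y, (M - Z y)⁻¹ with hcinvdef
  have hcinv : ∀ y : Y, (M - Z y)⁻¹ ≤ cinv :=
    fun y => Finset.single_le_sum (f := fun y : Y => (M - Z y)⁻¹)
      (fun y _ => inv_nonneg.mpr (hMZpos y).le) (Finset.mem_univ y)
  have hcinv0 : (0:ℝ) ≤ cinv :=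
    Finset.sum_nonneg (fun y _ => inv_nonneg.mpr (hMZpos y).le)
  -- measurability of the limit integrand
  have hwq : Measurable (fun q : (X × Y) × (X × Y) => w q.1.2 q.2.2) :=
    (measurable_of_countable (Function.uncurry w)).comp
      (measurable_fst.snd.prodMk measurable_snd.snd)
  have hexpq : Measurable (fun q : (X × Y) × (X × Y) => Real.exp (s q.1.1 q.2.1)) :=
    Real.measurable_exp.comp (hs_meas.comp (measurable_fst.fst.prodMk measurable_snd.fst))
  have hf_meas : Measurable (fun q : (X × Y) × (X × Y) =>
      ((M - w q.1.2 q.2.2) / (M - Z q.1.2)) * Real.exp (s q.1.1 q.2.1)) :=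
    ((measurable_const.sub hwq).div
      (measurable_const.sub ((measurable_of_countable Z).comp measurable_fst.snd))).mul hexpq
  have hf_bdd : ∀ q : (X × Y) × (X × Y),
      |((M - w q.1.2 q.2.2) / (M - Z q.1.2)) * Real.exp (s q.1.1 q.2.1)|
        ≤ M * cinv * Real.exp B := by
    intro q
    rw [abs_mul]
    have h1 : |(M - w q.1.2 q.2.2) / (M - Z q.1.2)| ≤ M * cinv := by
      rw [abs_of_nonneg (div_nonneg (by linarith [wM q.1.2 q.2.2]) (hMZpos q.1.2).le),
        div_eq_mul_inv]
      exact mul_le_mul (by linarith [hw_nonneg q.1.2 q.2.2]) (hcinv q.1.2)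
        (inv_nonneg.mpr (hMZpos q.1.2).le) hM0
    have h2 : |Real.exp (s q.1.1 q.2.1)| ≤ Real.exp B := by
      rw [abs_of_nonneg (Real.exp_nonneg _)]
      exact Real.exp_le_exp.mpr (le_trans (le_abs_self _) (hs_bdd _ _))
    exact mul_le_mul h1 h2 (abs_nonneg _) (by positivity)
  have hf_int : Integrable (fun q : (X × Y) × (X × Y) =>
      ((M - w q.1.2 q.2.2) / (M - Z q.1.2)) * Real.exp (s q.1.1 q.2.1))
      ((μ.map (V 0)).prod (μ.map (V 0))) :=
    integrable_of_abs_le _ hf_meas.aestronglyMeasurable _ hf_bdd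
  -- value of the limit
  set θtot := ∫ q : (X × Y) × (X × Y),
      ((M - w q.1.2 q.2.2) / (M - Z q.1.2)) * Real.exp (s q.1.1 q.2.1)
      ∂((μ.map (V 0)).prod (μ.map (V 0))) with hθtot
  have hval : (∑ y : Y, (∫ p, g y p.1 p.2 ∂((μ.map (V 0)).prod (μ.map (V 0))))
      * (M - Z y)⁻¹) = θtot := by
    have h1 : ∀ y : Y, (∫ p, g y p.1 p.2 ∂((μ.map (V 0)).prod (μ.map (V 0)))) * (M - Z y)⁻¹
        = ∫ p, g y p.1 p.2 * (M - Z y)⁻¹ ∂((μ.map (V 0)).prod (μ.map (V 0))) :=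
      fun y => (integral_mul_const _ _).symm
    have hint : ∀ y : Y, Integrable
        (fun p : (X × Y) × (X × Y) => g y p.1 p.2 * (M - Z y)⁻¹)
        ((μ.map (V 0)).prod (μ.map (V 0))) := by
      intro y
      refine integrable_of_abs_le _ ?_ (M * Real.exp B * cinv) ?_
      · exact ((hg_meas y).mul_const _).aestronglyMeasurable
      · intro p
        rw [abs_mul]
        exact mul_le_mul (hg_bdd y p.1 p.2) (by
          rw [abs_of_nonneg (inv_nonneg.mpr (hMZpos y).le)]; exact hcinv y)
          (abs_nonneg _) (by positivity)
    rw [Finset.sum_congr rfl (fun y _ => h1 y),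
      ← integral_finset_sum Finset.univ (fun y _ => hint y), hθtot]
    refine integral_congr_ae (ae_of_all _ fun q => ?_)
    beta_reduce
    have h2 : ∀ y, g y q.1 q.2 * (M - Z y)⁻¹
        = if q.1.2 = y then (M - w y q.2.2) * Real.exp (s q.1.1 q.2.1) * (M - Z y)⁻¹
          else 0 := by
      intro y; rw [hgdef]; by_cases h : q.1.2 = y <;> simp [h]
    rw [Finset.sum_congr rfl (fun y _ => h2 y), Finset.sum_ite_eq]
    simp only [Finset.mem_univ, if_true]
    rw [div_eq_mul_inv]; ring
  -- positivity of the limit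
  have hZmap : ∀ y : Y, ∫ b, w y b.2 ∂(μ.map (V 0)) = Z y := by
    intro y
    have hm : AEStronglyMeasurable (fun b : X × Y => w y b.2) (μ.map (V 0)) :=
      ((measurable_of_countable (w y)).comp measurable_snd).aestronglyMeasurable
    rw [integral_map (hV_meas 0).aemeasurable hm]
    exact (hZ y).symm
  have hwint : ∀ y : Y, Integrable (fun b : X × Y => w y b.2) (μ.map (V 0)) := fun y =>
    integrable_of_abs_le _ ((measurable_of_countable (w y)).comp
      measurable_snd).aestronglyMeasurable M
      (fun b => abs_le.mpr ⟨by linarith [hw_nonneg y b.2], wM _ _⟩)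
  have hpos : 0 < θtot := by
    rw [hθtot]
    have hu_meas : Measurable (fun q : (X × Y) × (X × Y) =>
        (M - w q.1.2 q.2.2) * (M - Z q.1.2)⁻¹) :=
      (measurable_const.sub hwq).mul
        ((measurable_of_countable (fun y => (M - Z y)⁻¹)).comp measurable_fst.snd)
    have hu_bdd : ∀ q : (X × Y) × (X × Y),
        |(M - w q.1.2 q.2.2) * (M - Z q.1.2)⁻¹| ≤ M * cinv := by
      intro q
      rw [abs_mul, abs_of_nonneg (by linarith [wM q.1.2 q.2.2] : (0:ℝ) ≤ M - w q.1.2 q.2.2),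
        abs_of_nonneg (inv_nonneg.mpr (hMZpos q.1.2).le)]
      exact mul_le_mul (by linarith [hw_nonneg q.1.2 q.2.2]) (hcinv q.1.2)
        (inv_nonneg.mpr (hMZpos q.1.2).le) hM0
    have hu_int : Integrable (fun q : (X × Y) × (X × Y) =>
        (M - w q.1.2 q.2.2) * (M - Z q.1.2)⁻¹) ((μ.map (V 0)).prod (μ.map (V 0))) :=
      integrable_of_abs_le _ hu_meas.aestronglyMeasurable _ hu_bdd
    have huint1 : ∫ q : (X × Y) × (X × Y),
        (M - w q.1.2 q.2.2) * (M - Z q.1.2)⁻¹ ∂((μ.map (V 0)).prod (μ.map (V 0))) = 1 := by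
      rw [integral_prod _ hu_int]
      have hin : ∀ a : X × Y, ∫ b, (M - w a.2 b.2) * (M - Z a.2)⁻¹ ∂(μ.map (V 0)) = 1 := by
        intro a
        rw [integral_mul_const, integral_sub (integrable_const M) (hwint a.2),
          integral_const, probReal_univ, smul_eq_mul, one_mul, hZmap]
        exact mul_inv_cancel₀ (hMZne a.2)
      rw [integral_congr_ae (ae_of_all _ hin)]
      simp
    have hlow : ∀ q : (X × Y) × (X × Y),
        Real.exp (-B) * ((M - w q.1.2 q.2.2) * (M - Z q.1.2)⁻¹)
          ≤ ((M - w q.1.2 q.2.2) / (M - Z q.1.2)) * Real.exp (s q.1.1 q.2.1) := by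
      intro q
      rw [div_eq_mul_inv, mul_comm (Real.exp (-B))]
      apply mul_le_mul_of_nonneg_left _ (mul_nonneg (by linarith [wM q.1.2 q.2.2])
        (inv_nonneg.mpr (hMZpos q.1.2).le))
      exact Real.exp_le_exp.mpr (neg_le_of_abs_le (hs_bdd _ _))
    calc (0:ℝ) < Real.exp (-B) * 1 := by positivity
      _ = ∫ q : (X × Y) × (X × Y),
            Real.exp (-B) * ((M - w q.1.2 q.2.2) * (M - Z q.1.2)⁻¹)
            ∂((μ.map (V 0)).prod (μ.map (V 0))) := by
          rw [integral_const_mul, huint1]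
      _ ≤ _ := integral_mono (hu_int.const_mul _) hf_int hlow
  -- combine the almost-sure events
  have hUall : ∀ᵐ ω ∂μ, ∀ y : Y, Tendsto (fun N : ℕ =>
      (1 / (N:ℝ)^2) * ∑ i ∈ Finset.range N, ∑ j ∈ Finset.range N, g y (V i ω) (V j ω))
      atTop (𝓝 (∫ p, g y p.1 p.2 ∂((μ.map (V 0)).prod (μ.map (V 0))))) :=
    ae_all_iff.mpr hU
  have hAall : ∀ᵐ ω ∂μ, ∀ y : Y, Tendsto (fun N : ℕ =>
      (∑ j' ∈ Finset.range N, w y (V j' ω).2) / N) atTop (𝓝 (Z y)) :=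
    ae_all_iff.mpr hA
  filter_upwards [hUall, hAall] with ω hUω hAω
  -- the pointwise algebraic identity
  have hpt : ∀ (a b : X × Y) (t : Y → ℝ),
      ((M - w a.2 b.2) / (M - t a.2)) * Real.exp (s a.1 b.1)
      = ∑ y : Y, g y a b * (M - t y)⁻¹ := by
    intro a b t
    have h2 : ∀ y, g y a b * (M - t y)⁻¹
        = if a.2 = y then (M - w y b.2) * Real.exp (s a.1 b.1) * (M - t y)⁻¹ else 0 := by
      intro y; rw [hgdef]; by_cases h : a.2 = y <;> simp [h]
    rw [Finset.sum_congr rfl (fun y _ => h2 y), Finset.sum_ite_eq]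
    simp only [Finset.mem_univ, if_true]
    rw [div_eq_mul_inv]; ring
  have hid : ∀ N : ℕ,
      (1 / (N:ℝ)^2) * ∑ i ∈ Finset.range N, ∑ j ∈ Finset.range N,
        ((M - w (V i ω).2 (V j ω).2) /
          (M - (1 / (N:ℝ)) * ∑ j' ∈ Finset.range N, w (V i ω).2 (V j' ω).2)) *
        Real.exp (s (V i ω).1 (V j ω).1)
      = ∑ y : Y, ((1 / (N:ℝ)^2) * ∑ i ∈ Finset.range N, ∑ j ∈ Finset.range N,
          g y (V i ω) (V j ω)) *
          (M - (1 / (N:ℝ)) * ∑ j' ∈ Finset.range N, w y (V j' ω).2)⁻¹ := by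
    intro N
    have h1 : ∀ i j : ℕ,
        ((M - w (V i ω).2 (V j ω).2) /
          (M - (1 / (N:ℝ)) * ∑ j' ∈ Finset.range N, w (V i ω).2 (V j' ω).2)) *
          Real.exp (s (V i ω).1 (V j ω).1)
        = ∑ y : Y, g y (V i ω) (V j ω) *
            (M - (1 / (N:ℝ)) * ∑ j' ∈ Finset.range N, w y (V j' ω).2)⁻¹ := by
      intro i j
      have h := hpt (V i ω) (V j ω)
        (fun y => (1 / (N:ℝ)) * ∑ j' ∈ Finset.range N, w y (V j' ω).2)
      beta_reduce at h
      exact h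
    calc (1 / (N:ℝ)^2) * ∑ i ∈ Finset.range N, ∑ j ∈ Finset.range N,
          ((M - w (V i ω).2 (V j ω).2) /
            (M - (1 / (N:ℝ)) * ∑ j' ∈ Finset.range N, w (V i ω).2 (V j' ω).2)) *
          Real.exp (s (V i ω).1 (V j ω).1)
        = (1 / (N:ℝ)^2) * ∑ i ∈ Finset.range N, ∑ j ∈ Finset.range N,
            ∑ y : Y, g y (V i ω) (V j ω) *
              (M - (1 / (N:ℝ)) * ∑ j' ∈ Finset.range N, w y (V j' ω).2)⁻¹ := by
          rw [Finset.sum_congr rfl (fun i _ => Finset.sum_congr rfl (fun j _ => h1 i j))]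
      _ = (1 / (N:ℝ)^2) * ∑ y : Y, ∑ i ∈ Finset.range N, ∑ j ∈ Finset.range N,
            g y (V i ω) (V j ω) *
              (M - (1 / (N:ℝ)) * ∑ j' ∈ Finset.range N, w y (V j' ω).2)⁻¹ := by
          congr 1
          rw [Finset.sum_congr rfl (fun i _ => Finset.sum_comm)]
          exact Finset.sum_comm
      _ = ∑ y : Y, ((1 / (N:ℝ)^2) * ∑ i ∈ Finset.range N, ∑ j ∈ Finset.range N,
            g y (V i ω) (V j ω)) *
            (M - (1 / (N:ℝ)) * ∑ j' ∈ Finset.range N, w y (V j' ω).2)⁻¹ := by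
          rw [Finset.mul_sum]
          refine Finset.sum_congr rfl (fun y _ => ?_)
          rw [Finset.sum_congr rfl (fun i _ => (Finset.sum_mul _ _ _).symm),
            ← Finset.sum_mul]
          ring
  -- limits of the normalisation terms
  have hA2 : ∀ y : Y, Tendsto (fun N : ℕ =>
      (1 / (N:ℝ)) * ∑ j' ∈ Finset.range N, w y (V j' ω).2) atTop (𝓝 (Z y)) := by
    intro y
    exact (hAω y).congr (fun N => (one_div_mul_eq_div _ _).symm)
  have hlim : Tendsto (fun N : ℕ =>
      ∑ y : Y, ((1 / (N:ℝ)^2) * ∑ i ∈ Finset.range N, ∑ j ∈ Finset.range N,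
        g y (V i ω) (V j ω)) *
        (M - (1 / (N:ℝ)) * ∑ j' ∈ Finset.range N, w y (V j' ω).2)⁻¹)
      atTop (𝓝 (∑ y : Y, (∫ p, g y p.1 p.2 ∂((μ.map (V 0)).prod (μ.map (V 0))))
        * (M - Z y)⁻¹)) :=
    tendsto_finset_sum _ (fun y _ => (hUω y).mul
      ((tendsto_const_nhds.sub (hA2 y)).inv₀ (hMZne y)))
  rw [hval] at hlim
  have hT := hlim.congr (fun N => (hid N).symm)
  exact (Real.continuousAt_log hpos.ne').tendsto.comp hT
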